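/- Let q ≥ 2, m > 3, n = q^m - 1. Suppose 1 ≤ x, y < n with x·y < q^m - 1 - q^{⌊m/2⌋}, where x has top nonzero q-ary digit at position k ≤ (m-1)/2, and let l satisfy m - k - 1 < l ≤ m - 1. Then ((-x·q^l) mod n)·((-y·q^l) mod n) ≥ q^m - 1. -/
import Mathlib

lemma rot_eq (q : ℤ) (hq : 2 ≤ q) (m t : ℕ) (ht : 1 ≤ t) (htm : t < m) (z : ℤ)
    (hz1 : 1 ≤ z) (hzn : z < q ^ m - 1) :
    (-z * q ^ (m - t)) % (q ^ m - 1)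
      = (q ^ m - 1) - ((z % q ^ t) * q ^ (m - t) + z / q ^ t) := by
  have hq0 : (0:ℤ) < q := by linarith
  have hqt : (0:ℤ) < q ^ t := pow_pos hq0 t
  have hqmt : (1:ℤ) ≤ q ^ (m - t) := one_le_pow₀ (by linarith)
  have hsplit : q ^ (m - t) * q ^ t = q ^ m := by
    rw [← pow_add]; congr 1; omega
  have hdm : q ^ t * (z / q ^ t) + z % q ^ t = z := Int.mul_ediv_add_emod z (q ^ t)
  have hr0 : 0 ≤ z % q ^ t := Int.emod_nonneg z (ne_of_gt hqt)
  have hrlt : z % q ^ t < q ^ t := Int.emod_lt_of_pos z hqt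
  have hd0 : 0 ≤ z / q ^ t := Int.ediv_nonneg (by linarith) (le_of_lt hqt)
  set n := q ^ m - 1 with hn
  set e := (z % q ^ t) * q ^ (m - t) + z / q ^ t with he
  have hident : (n - e) * q ^ t = (n - z) + (q ^ t - 1 - z % q ^ t) * n := by
    rw [hn, he]
    linear_combination (-(z % q ^ t)) * hsplit - hdm
  have hn1 : (1:ℤ) ≤ n := by
    have h2 : (2:ℤ) ≤ q ^ m := by
      calc (2:ℤ) ≤ q := hq
        _ = q ^ 1 := (pow_one q).symm
        _ ≤ q ^ m := pow_le_pow_right₀ (by linarith) (by omega)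
    rw [hn]; linarith
  have he1 : 1 ≤ e := by
    rcases eq_or_lt_of_le hr0 with h0 | h0
    · have hz : q ^ t * (z / q ^ t) = z := by rw [← h0] at hdm; linarith
      have : 1 ≤ z / q ^ t := by nlinarith
      rw [he]; nlinarith
    · rw [he]; nlinarith
  have hen : e < n := by
    have h1 : 0 < (n - e) * q ^ t := by nlinarith
    nlinarith
  have hcong : -z * q ^ (m - t) = (n - e) + (-(z / q ^ t) - 1) * n := by
    rw [hn, he]
    linear_combination (-(z / q ^ t)) * hsplit + (q ^ (m - t)) * hdm
  rw [hcong, Int.add_mul_emod_self_right, Int.emod_eq_of_lt (by linarith) (by linarith)]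

lemma Epos (q T C B : ℤ) (hq : 2 ≤ q) (hT : q ≤ T) (hC : 1 ≤ C)
    (hB1 : T * C ≤ B) (hB2 : q * q ≤ B) :
    0 ≤ q * B * (T * C) - q * B - q * (T * C) + q - T * T := by
  have hT0 : (0:ℤ) ≤ T := by linarith
  have hTC0 : (0:ℤ) ≤ T * C := by positivity
  have hTTC : T ≤ T * C := le_mul_of_one_le_right hT0 hC
  rcases le_or_gt 4 (T * C) with h | h
  · nlinarith [mul_nonneg (mul_nonneg (by linarith : (0:ℤ) ≤ q) (by linarith : (0:ℤ) ≤ T*C - 1)) (by linarith : (0:ℤ) ≤ B - T*C),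
      mul_nonneg (mul_nonneg (by linarith : (0:ℤ) ≤ q - 1) hTC0) (by linarith : (0:ℤ) ≤ T*C - 4),
      mul_nonneg (by linarith : (0:ℤ) ≤ q - 2) hTC0,
      mul_le_mul hTTC hTTC hT0 hTC0]
  · have hC1 : C = 1 := by nlinarith
    subst hC1
    have hT3 : T ≤ 3 := by nlinarith
    have hq3 : q ≤ 3 := by linarith
    interval_cases q <;> interval_cases T <;> linarith

set_option maxHeartbeats 1000000 in
/-- Case iii) of Lemma 4: for m - k - 1 < l ≤ m - 1 the product of residues is at
least q^m - 1. -/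
theorem stmt_8 (q : ℤ) (hq : 2 ≤ q) (m : ℕ) (hm : 3 < m) (x y : ℤ) (k l : ℕ)
    (hx1 : 1 ≤ x) (hxn : x < q ^ m - 1) (hy1 : 1 ≤ y) (hyn : y < q ^ m - 1)
    (hxy : x * y < q ^ m - 1 - q ^ (m / 2))
    (hxk : q ^ k ≤ x) (hxk' : x ≤ q ^ (k + 1) - 1) (hk : k ≤ (m - 1) / 2)
    (hl : m - k - 1 < l) (hl' : l ≤ m - 1) :
    ((-x * q ^ l) % (q ^ m - 1)) * ((-y * q ^ l) % (q ^ m - 1)) ≥ q ^ m - 1 := by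
  have hq0 : (0:ℤ) < q := by linarith
  have hq1 : (1:ℤ) ≤ q := by linarith
  have hk1 : 1 ≤ k := by omega
  have hkm : 2 * k + 1 ≤ m := by omega
  obtain ⟨t, ht1, htk, rfl⟩ : ∃ t, 1 ≤ t ∧ t ≤ k ∧ l = m - t :=
    ⟨m - l, by omega, by omega, by omega⟩
  have htm : t < m := by omega
  have h2m : (2:ℤ) ≤ q ^ m := by
    calc (2:ℤ) ≤ q := hq
      _ = q ^ 1 := (pow_one q).symm
      _ ≤ q ^ m := pow_le_pow_right₀ hq1 (by omega)
  set n := q ^ m - 1 with hn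
  clear_value n
  set T := q ^ t with hT
  set C := q ^ (k - t) with hC
  set B := q ^ (m - k - 1) with hB
  clear_value T C B
  have hTC : T * C = q ^ k := by rw [hT, hC, ← pow_add]; congr 1; omega
  have hA : q * C = q ^ (k + 1 - t) := by
    rw [hC, ← pow_succ']; congr 1; omega
  have hMT : q ^ (m - t) = q * C * B := by
    rw [hA, hB, ← pow_add]; congr 1; omega
  have hM : q ^ m = T * (q * C * B) := by
    rw [← hMT, hT, ← pow_add]; congr 1; omega
  have hT2 : T * T ≤ T * C * B := by
    have e1 : T * T = q ^ (t + t) := by rw [hT, pow_add]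
    have e2 : T * C * B = q ^ (m - 1) := by
      rw [hTC, hB, ← pow_add]; congr 1; omega
    rw [e1, e2]; exact pow_le_pow_right₀ hq1 (by omega)
  have hB1 : T * C ≤ B := by
    rw [hTC, hB]; exact pow_le_pow_right₀ hq1 (by omega)
  have hB2 : q * q ≤ B := by
    have e : q * q = q ^ 2 := by ring
    rw [e, hB]; exact pow_le_pow_right₀ hq1 (by omega)
  have hTq : q ≤ T := by
    rw [hT]; exact le_self_pow₀ hq1 (by omega)
  have hC1 : (1:ℤ) ≤ C := by rw [hC]; exact one_le_pow₀ hq1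
  have hT0 : (0:ℤ) < T := by linarith
  have hB0 : (2:ℤ) ≤ B := by
    have h44 : (2:ℤ) * 2 ≤ q * q := mul_le_mul hq hq (by norm_num) (by linarith)
    linarith
  have hTC2 : (2:ℤ) ≤ T * C := by
    have := mul_le_mul_of_nonneg_left hC1 (by linarith : (0:ℤ) ≤ T)
    linarith
  have hn1 : (1:ℤ) ≤ n := by rw [hn]; linarith
  have hxy3 : x * y ≤ n - 3 := by
    have h4 : (4:ℤ) ≤ q ^ (m / 2) := by
      calc (4:ℤ) = 2 * 2 := by norm_num
        _ ≤ q * q := mul_le_mul hq hq (by norm_num) (by linarith)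
        _ = q ^ 2 := (sq q).symm
        _ ≤ q ^ (m / 2) := pow_le_pow_right₀ hq1 (by omega)
    linarith
  have hrx := rot_eq q hq m t ht1 htm x hx1 (by rw [← hn]; exact hxn)
  have hry := rot_eq q hq m t ht1 htm y hy1 (by rw [← hn]; exact hyn)
  rw [← hn] at hrx hry
  set rx := (-x * q ^ (m - t)) % n with hrxdef
  set ry := (-y * q ^ (m - t)) % n with hrydef
  clear_value rx ry
  have hqt : (0:ℤ) < q ^ t := pow_pos hq0 t
  have hn0 : n ≠ 0 := by linarith
  have hrx0 : 0 ≤ rx := hrxdef ▸ Int.emod_nonneg _ hn0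
  have hry0 : 0 ≤ ry := hrydef ▸ Int.emod_nonneg _ hn0
  -- bound rx
  have hxr0 : 0 ≤ x % q ^ t := Int.emod_nonneg x (ne_of_gt hqt)
  have hxrlt : x % q ^ t < q ^ t := Int.emod_lt_of_pos x hqt
  have hxd : x / q ^ t ≤ q * C - 1 := by
    have hlt : x / q ^ t < q ^ (k + 1 - t) := by
      rw [Int.ediv_lt_iff_lt_mul hqt]
      have e : q ^ (k + 1 - t) * q ^ t = q ^ (k + 1) := by rw [← pow_add]; congr 1; omega
      rw [e]; linarith
    rw [hA]; linarith
  have hCB0 : (0:ℤ) ≤ q * C * B :=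
    mul_nonneg (mul_nonneg (by linarith) (by linarith)) (by linarith)
  have h1 : q * C * (B - 1) ≤ rx := by
    rw [hrx, hn, hMT, hM]
    have e1 : (x % q ^ t) * (q * C * B) ≤ (T - 1) * (q * C * B) := by
      apply mul_le_mul_of_nonneg_right _ hCB0
      rw [hT]; linarith
    linarith only [e1, hxd]
  -- bound ry * T ≥ n - y
  have hyr0 : 0 ≤ y % q ^ t := Int.emod_nonneg y (ne_of_gt hqt)
  have hyrlt : y % q ^ t < q ^ t := Int.emod_lt_of_pos y hqt
  have hydm : q ^ t * (y / q ^ t) + y % q ^ t = y := Int.mul_ediv_add_emod y (q ^ t)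
  have h3 : n - y ≤ ry * T := by
    rw [hry, hT, hn]
    have hsp : q ^ (m - t) * q ^ t = q ^ m := by rw [← pow_add]; congr 1; omega
    have hsp2 : (y % q ^ t) * (q ^ (m - t) * q ^ t) = (y % q ^ t) * q ^ m := by rw [hsp]
    have h5 : (y % q ^ t) * (q ^ m - 1) ≤ (q ^ t - 1) * (q ^ m - 1) :=
      mul_le_mul_of_nonneg_right (by linarith) (by linarith)
    nlinarith only [hsp2, h5, hydm]
  -- combine
  have hyTC : y * (T * C) ≤ x * y := by
    rw [hTC]
    calc y * q ^ k ≤ y * x := mul_le_mul_of_nonneg_left hxk (by linarith)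
      _ = x * y := mul_comm y x
  have hrhs0 : (0:ℤ) ≤ n * (T * C - 1) + 3 := by
    have := mul_nonneg (by linarith : (0:ℤ) ≤ n) (by linarith : (0:ℤ) ≤ T * C - 1)
    linarith
  have s2 : n * (T * C - 1) + 3 ≤ ry * T * (T * C) := by
    have hs := mul_le_mul_of_nonneg_right h3 (by linarith : (0:ℤ) ≤ T * C)
    nlinarith only [hs, hyTC, hxy3]
  have s3 : (q * C * (B - 1)) * (n * (T * C - 1) + 3) ≤ rx * (ry * T * (T * C)) :=
    mul_le_mul h1 s2 hrhs0 hrx0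
  have hE := Epos q T C B hq hTq hC1 hB1 hB2
  have s4 : n * (T * (T * C)) ≤ (q * C * (B - 1)) * (n * (T * C - 1) + 3) := by
    have expand : (q * C * (B - 1)) * (n * (T * C - 1) + 3) - n * (T * (T * C))
        = n * (C * (q * B * (T * C) - q * B - q * (T * C) + q - T * T))
          + 3 * (q * C * (B - 1)) := by ring
    have p1 : 0 ≤ n * (C * (q * B * (T * C) - q * B - q * (T * C) + q - T * T)) :=
      mul_nonneg (by linarith) (mul_nonneg (by linarith) hE)
    have p2 : (0:ℤ) ≤ 3 * (q * C * (B - 1)) := by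
      have := mul_nonneg (mul_nonneg (by linarith : (0:ℤ) ≤ q) (by linarith : (0:ℤ) ≤ C))
        (by linarith : (0:ℤ) ≤ B - 1)
      linarith
    linarith
  have s5 : n * (T * (T * C)) ≤ rx * ry * (T * (T * C)) := by
    have e : rx * (ry * T * (T * C)) = rx * ry * (T * (T * C)) := by ring
    linarith [e ▸ s3]
  have hpos : (0:ℤ) < T * (T * C) := mul_pos hT0 (by linarith)
  exact le_of_mul_le_mul_right s5 hpos
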